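/- Let h : ℝ² → ℂ be locally integrable with h(R_{2π/3} X) = h(X) for all X ∈ ℝ², and suppose the function X ↦ h(X) e^{i q₁·X} is 𝕃_M-periodic. Then for any fundamental domain Ω_M of 𝕃_M, the three integrals ∫_{Ω_M} h(X) e^{i q_n·X} dX for n = 1, 2, 3 are all equal; in particular (1/3) Σ_{n=1}^{3} ∫_{Ω_M} h(X) e^{i q_n·X} dX = ∫_{Ω_M} h(X) e^{i q₁·X} dX. -/

import Mathlib

noncomputable section

open MeasureTheory Real Complex

abbrev Pt : Type := ℝ × ℝ

/-- Euclidean dot product on ℝ². -/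
def dot (v w : Pt) : ℝ := v.1 * w.1 + v.2 * w.2

/-- The matrix J acting by J(x₁,x₂) = (x₂, −x₁). -/
def Jmat (v : Pt) : Pt := (v.2, -v.1)

/-- Rotation of ℝ² by angle θ. -/
def rotA (θ : ℝ) (v : Pt) : Pt :=
  (Real.cos θ * v.1 - Real.sin θ * v.2, Real.sin θ * v.1 + Real.cos θ * v.2)

/-- Lattice vector a₁ = a₀(1/2, −√3/2). -/
def av1 (a0 : ℝ) : Pt := (a0 / 2, -(Real.sqrt 3 * a0 / 2))

/-- Lattice vector a₂ = a₀(1/2, √3/2). -/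
def av2 (a0 : ℝ) : Pt := (a0 / 2, Real.sqrt 3 * a0 / 2)

/-- The graphene lattice 𝕃 = ℤa₁ + ℤa₂. -/
def lat (a0 : ℝ) : AddSubgroup Pt := AddSubgroup.closure {av1 a0, av2 a0}

/-- The moiré lattice 𝕃_M = J𝕃. -/
def latM (a0 : ℝ) : AddSubgroup Pt := AddSubgroup.closure {Jmat (av1 a0), Jmat (av2 a0)}

/-- Dual basis vector a₁*. -/
def as1 (a0 : ℝ) : Pt := (2 * π / a0, -(2 * π / (Real.sqrt 3 * a0)))

/-- Dual basis vector a₂*. -/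
def as2 (a0 : ℝ) : Pt := (2 * π / a0, 2 * π / (Real.sqrt 3 * a0))

/-- The Dirac point K = (a₁* + a₂*)/3. -/
def Kpt (a0 : ℝ) : Pt := (3 : ℝ)⁻¹ • (as1 a0 + as2 a0)

/-- A dual lattice vector G = m₁a₁* + m₂a₂*. -/
def dualVec (a0 : ℝ) (m : ℤ × ℤ) : Pt := (m.1 : ℝ) • as1 a0 + (m.2 : ℝ) • as2 a0

/-- 𝕃-periodicity in the first variable. -/
def LPeriodic (a0 : ℝ) (f : Pt → ℝ → ℂ) : Prop :=
  ∀ R ∈ lat a0, ∀ (x : Pt) (z : ℝ), f (x + R) z = f x z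

/-- K-quasiperiodicity in the first variable. -/
def KQuasiperiodic (a0 : ℝ) (Φ : Pt → ℝ → ℂ) : Prop :=
  ∀ R ∈ lat a0, ∀ (x : Pt) (z : ℝ),
    Φ (x + R) z = Complex.exp (Complex.I * (dot (Kpt a0) R : ℂ)) * Φ x z

/-- ω = e^{2πi/3}. -/
def ωc : ℂ := Complex.exp (2 * Real.pi * Complex.I / 3)

/-- The integrand of ((f,g))_d^{ηη'}(X). -/
def braFn (d η η' : ℝ) (f g : Pt → ℝ → ℂ) (X : Pt) (p : Pt × ℝ) : ℂ :=
  (starRingEnd ℂ) (f (p.1 - (η / 2) • Jmat X) (p.2 - η * d / 2)) *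
    g (p.1 - (η' / 2) • Jmat X) (p.2 - η' * d / 2)

/-- ((f,g))_d^{ηη'}(X), the interlayer pairing. -/
def bra (d : ℝ) (Ω : Set Pt) (η η' : ℝ) (f g : Pt → ℝ → ℂ) (X : Pt) : ℂ :=
  ∫ p in Ω ×ˢ (Set.univ : Set ℝ), braFn d η η' f g X p

/-- q₁ = JK. -/
def q1v (a0 : ℝ) : Pt := Jmat (Kpt a0)

/-- q₂ = R_{2π/3} q₁. -/
def q2v (a0 : ℝ) : Pt := rotA (2 * π / 3) (q1v a0)

/-- q₃ = R_{2π/3} q₂. -/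
def q3v (a0 : ℝ) : Pt := rotA (2 * π / 3) (q2v a0)

/-- F(X) = e^{−iq₁·X} + ω e^{−iq₂·X} + ω² e^{−iq₃·X}. -/
def Ffun (a0 : ℝ) (X : Pt) : ℂ :=
  Complex.exp (-Complex.I * (dot (q1v a0) X : ℂ)) +
    ωc * Complex.exp (-Complex.I * (dot (q2v a0) X : ℂ)) +
    ωc ^ 2 * Complex.exp (-Complex.I * (dot (q3v a0) X : ℂ))

/-- G(X) = e^{−iq₁·X} + e^{−iq₂·X} + e^{−iq₃·X}. -/
def Gfun (a0 : ℝ) (X : Pt) : ℂ :=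
  Complex.exp (-Complex.I * (dot (q1v a0) X : ℂ)) +
    Complex.exp (-Complex.I * (dot (q2v a0) X : ℂ)) +
    Complex.exp (-Complex.I * (dot (q3v a0) X : ℂ))

lemma rotA_add (θ : ℝ) (x y : Pt) : rotA θ (x + y) = rotA θ x + rotA θ y := by
  simp only [rotA, Prod.ext_iff, Prod.fst_add, Prod.snd_add]
  constructor <;> ring

lemma rotA_smul (θ : ℝ) (c : ℝ) (x : Pt) : rotA θ (c • x) = c • rotA θ x := by
  simp only [rotA, Prod.ext_iff, Prod.smul_fst, Prod.smul_snd, smul_eq_mul]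
  constructor <;> ring

lemma dot_rotA (θ : ℝ) (v w : Pt) : dot (rotA θ v) (rotA θ w) = dot v w := by
  have hθ := Real.sin_sq_add_cos_sq θ
  simp only [dot, rotA]
  linear_combination (v.1 * w.1 + v.2 * w.2) * hθ

lemma cos23 : Real.cos (2 * π / 3) = -(1/2) := by
  have : (2 * π / 3 : ℝ) = π - π/3 := by ring
  rw [this, Real.cos_pi_sub, Real.cos_pi_div_three]

lemma sin23 : Real.sin (2 * π / 3) = Real.sqrt 3 / 2 := by
  have : (2 * π / 3 : ℝ) = π - π/3 := by ring
  rw [this, Real.sin_pi_sub, Real.sin_pi_div_three]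

lemma rotA_three (v : Pt) :
    rotA (2 * π / 3) (rotA (2 * π / 3) (rotA (2 * π / 3) v)) = v := by
  have h3 : Real.sqrt 3 ^ 2 = 3 := Real.sq_sqrt (by norm_num)
  simp only [rotA, cos23, sin23, Prod.ext_iff]
  constructor
  · linear_combination (3/8 * v.1 + Real.sqrt 3 / 8 * v.2) * h3
  · linear_combination (3/8 * v.2 - Real.sqrt 3 / 8 * v.1) * h3

def rotHom : Pt →+ Pt := AddMonoidHom.mk' (rotA (2 * π / 3)) (rotA_add _)

lemma rot_Ja1 (a0 : ℝ) : rotA (2 * π / 3) (Jmat (av1 a0)) = Jmat (av2 a0) := by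
  have h3 : Real.sqrt 3 ^ 2 = 3 := Real.sq_sqrt (by norm_num)
  simp only [rotA, Jmat, av1, av2, cos23, sin23, Prod.ext_iff]
  constructor
  · ring
  · linear_combination (-(a0/4)) * h3

lemma rot_Ja2 (a0 : ℝ) :
    rotA (2 * π / 3) (Jmat (av2 a0)) = -Jmat (av1 a0) - Jmat (av2 a0) := by
  have h3 : Real.sqrt 3 ^ 2 = 3 := Real.sq_sqrt (by norm_num)
  simp only [rotA, Jmat, av1, av2, cos23, sin23, Prod.ext_iff, Prod.fst_sub, Prod.snd_sub,
    Prod.fst_neg, Prod.snd_neg]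
  constructor
  · ring
  · linear_combination (a0/4) * h3

lemma rot_mem_latM (a0 : ℝ) {v : Pt} (hv : v ∈ latM a0) :
    rotA (2 * π / 3) v ∈ latM a0 := by
  have hle : latM a0 ≤ (latM a0).comap rotHom := by
    rw [latM, AddSubgroup.closure_le]
    rintro x (rfl | rfl)
    · simp only [SetLike.mem_coe, AddSubgroup.mem_comap]
      show rotA (2 * π / 3) (Jmat (av1 a0)) ∈ latM a0
      rw [rot_Ja1]
      exact AddSubgroup.subset_closure (by simp)
    · simp only [SetLike.mem_coe, AddSubgroup.mem_comap]
      show rotA (2 * π / 3) (Jmat (av2 a0)) ∈ latM a0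
      rw [rot_Ja2]
      have h1 : Jmat (av1 a0) ∈ latM a0 := AddSubgroup.subset_closure (by simp)
      have h2 : Jmat (av2 a0) ∈ latM a0 := AddSubgroup.subset_closure (by simp)
      exact sub_mem (neg_mem h1) h2
  exact hle hv

def rotL (θ : ℝ) : Pt →ₗ[ℝ] Pt where
  toFun := rotA θ
  map_add' := rotA_add θ
  map_smul' := rotA_smul θ

lemma rotL_det (θ : ℝ) : LinearMap.det (rotL θ) = 1 := by
  have heq : rotL θ = Matrix.toLin (Module.Basis.finTwoProd ℝ) (Module.Basis.finTwoProd ℝ)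
      !![Real.cos θ, -Real.sin θ; Real.sin θ, Real.cos θ] := by
    refine LinearMap.ext fun v => ?_
    rw [Matrix.toLin_finTwoProd_apply]
    simp only [rotL, rotA, LinearMap.coe_mk, AddHom.coe_mk, Prod.ext_iff]
    constructor
    · ring
    · trivial
  rw [heq, LinearMap.det_toLin, Matrix.det_fin_two_of]
  have := Real.sin_sq_add_cos_sq θ
  nlinarith [this]

lemma rotA_measurable (θ : ℝ) : Measurable (rotA θ) := by
  unfold rotA; fun_prop

lemma mp_rot (θ : ℝ) : MeasurePreserving (rotA θ) (volume : Measure Pt) volume := by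
  refine ⟨rotA_measurable θ, ?_⟩
  have hd : LinearMap.det (rotL θ) ≠ 0 := by rw [rotL_det]; norm_num
  have := Measure.map_linearMap_addHaar_eq_smul_addHaar (volume : Measure Pt) hd
  rw [rotL_det] at this
  simp at this
  exact this

def rotE : Pt ≃ᵐ Pt where
  toFun := rotA (2 * π / 3)
  invFun := fun v => rotA (2 * π / 3) (rotA (2 * π / 3) v)
  left_inv := fun v => rotA_three v
  right_inv := fun v => rotA_three v
  measurable_toFun := rotA_measurable _
  measurable_invFun := (rotA_measurable _).comp (rotA_measurable _)

lemma latM_mem_gen1 (a0 : ℝ) : Jmat (av1 a0) ∈ latM a0 :=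
  AddSubgroup.subset_closure (by simp)

lemma latM_mem_gen2 (a0 : ℝ) : Jmat (av2 a0) ∈ latM a0 :=
  AddSubgroup.subset_closure (by simp)

instance latM_countable (a0 : ℝ) : Countable (latM a0) := by
  have hsurj : Function.Surjective (fun p : ℤ × ℤ =>
      (⟨p.1 • Jmat (av1 a0) + p.2 • Jmat (av2 a0),
        add_mem (zsmul_mem (latM_mem_gen1 a0) _) (zsmul_mem (latM_mem_gen2 a0) _)⟩ :
          latM a0)) := by
    rintro ⟨z, hz⟩
    obtain ⟨m, n, hmn⟩ := (AddSubgroup.mem_closure_pair).1 hz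
    exact ⟨(m, n), Subtype.ext hmn⟩
  exact hsurj.countable

/-- if h is R_{2π/3}-invariant and X ↦ h(X)e^{iq₁·X} is 𝕃_M-periodic, then the
three integrals ∫_{Ω_M} h e^{iq_n·X} dX (n = 1,2,3) coincide, so their average equals the
first one. -/
theorem stmt8 (a0 : ℝ) (ha0 : 0 < a0) (h : Pt → ℂ)
    (hloc : LocallyIntegrable h volume)
    (hrot : ∀ X : Pt, h (rotA (2 * π / 3) X) = h X)
    (hper : ∀ R ∈ latM a0, ∀ X : Pt,
      h (X + R) * Complex.exp (Complex.I * (dot (q1v a0) (X + R) : ℂ)) =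
        h X * Complex.exp (Complex.I * (dot (q1v a0) X : ℂ)))
    (ΩM : Set Pt) (hΩM : IsAddFundamentalDomain (latM a0) ΩM volume) :
    (∫ X in ΩM, h X * Complex.exp (Complex.I * (dot (q2v a0) X : ℂ))) =
        (∫ X in ΩM, h X * Complex.exp (Complex.I * (dot (q1v a0) X : ℂ))) ∧
    (∫ X in ΩM, h X * Complex.exp (Complex.I * (dot (q3v a0) X : ℂ))) =
        (∫ X in ΩM, h X * Complex.exp (Complex.I * (dot (q1v a0) X : ℂ))) ∧
    (3 : ℂ)⁻¹ * ((∫ X in ΩM, h X * Complex.exp (Complex.I * (dot (q1v a0) X : ℂ))) +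
          (∫ X in ΩM, h X * Complex.exp (Complex.I * (dot (q2v a0) X : ℂ))) +
          (∫ X in ΩM, h X * Complex.exp (Complex.I * (dot (q3v a0) X : ℂ)))) =
        ∫ X in ΩM, h X * Complex.exp (Complex.I * (dot (q1v a0) X : ℂ)) := by
  classical
  set R : Pt → Pt := rotA (2 * π / 3) with hR
  set f1 : Pt → ℂ := fun X => h X * Complex.exp (Complex.I * (dot (q1v a0) X : ℂ)) with hf1
  set f2 : Pt → ℂ := fun X => h X * Complex.exp (Complex.I * (dot (q2v a0) X : ℂ)) with hf2
  set f3 : Pt → ℂ := fun X => h X * Complex.exp (Complex.I * (dot (q3v a0) X : ℂ)) with hf3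
  -- composition identities
  have hf2R : ∀ X : Pt, f2 (R X) = f1 X := by
    intro X
    have hd : dot (q2v a0) (R X) = dot (q1v a0) X := dot_rotA _ _ _
    simp only [hf2, hf1, hrot X, hd]
  have hf3R : ∀ X : Pt, f3 (R X) = f2 X := by
    intro X
    have hd : dot (q3v a0) (R X) = dot (q2v a0) X := dot_rotA _ _ _
    simp only [hf3, hf2, hrot X, hd]
  have hf2comp : ∀ X : Pt, f2 X = f1 (R (R X)) := by
    intro X
    have := hf2R (R (R X))
    rw [show R (R (R X)) = X from rotA_three X] at this
    exact this
  have hf3comp : ∀ X : Pt, f3 X = f2 (R (R X)) := by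
    intro X
    have := hf3R (R (R X))
    rw [show R (R (R X)) = X from rotA_three X] at this
    exact this
  -- invariance
  have hf1inv : ∀ (g : (latM a0)) (x : Pt), f1 ((g : Pt) +ᵥ x) = f1 x := by
    intro g x
    show f1 ((g : Pt) + x) = f1 x
    rw [add_comm]
    exact hper g g.2 x
  have hf2inv : ∀ (g : (latM a0)) (x : Pt), f2 ((g : Pt) +ᵥ x) = f2 x := by
    intro g x
    show f2 ((g : Pt) + x) = f2 x
    have hg2 : R (R (g : Pt)) ∈ latM a0 := rot_mem_latM a0 (rot_mem_latM a0 g.2)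
    rw [hf2comp, hf2comp x, show R (R ((g : Pt) + x)) = R (R (g : Pt)) + R (R x) by
      rw [hR]; rw [rotA_add, rotA_add], add_comm]
    exact hper _ hg2 _
  -- the group equivalence g ↦ R² g
  have hmemR : ∀ g : (latM a0), R ((g : Pt)) ∈ latM a0 := fun g => rot_mem_latM a0 g.2
  let e : (latM a0) ≃ (latM a0) :=
    { toFun := fun g => ⟨R (R (g : Pt)), rot_mem_latM a0 (hmemR g)⟩
      invFun := fun g => ⟨R (g : Pt), hmemR g⟩
      left_inv := fun g => Subtype.ext (rotA_three (g : Pt))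
      right_inv := fun g => Subtype.ext (rotA_three (g : Pt)) }
  have hFD2 : IsAddFundamentalDomain (latM a0) (R ⁻¹' ΩM) volume := by
    refine hΩM.preimage_of_equiv (mp_rot (2 * π / 3)).quasiMeasurePreserving
      e.bijective (fun g x => ?_)
    show R (((e g : (latM a0)) : Pt) + x) = (g : Pt) + R x
    rw [show ((e g : (latM a0)) : Pt) = R (R (g : Pt)) from rfl, hR, rotA_add,
      rotA_three (g : Pt)]
  have hemb : MeasurableEmbedding R := rotE.measurableEmbedding
  have hcov2 : (∫ X in ΩM, f2 X) = ∫ X in R ⁻¹' ΩM, f1 X := by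
    rw [← (mp_rot (2 * π / 3)).setIntegral_preimage_emb hemb f2 ΩM]
    congr 1
    exact funext hf2R
  have hcov3 : (∫ X in ΩM, f3 X) = ∫ X in R ⁻¹' ΩM, f2 X := by
    rw [← (mp_rot (2 * π / 3)).setIntegral_preimage_emb hemb f3 ΩM]
    congr 1
    exact funext hf3R
  have h2 : (∫ X in ΩM, f2 X) = ∫ X in ΩM, f1 X := by
    rw [hcov2]
    exact hFD2.setIntegral_eq hΩM hf1inv
  have h3 : (∫ X in ΩM, f3 X) = ∫ X in ΩM, f1 X := by
    rw [hcov3, hFD2.setIntegral_eq hΩM hf2inv, h2]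
  refine ⟨h2, h3, ?_⟩
  rw [h2, h3]
  ring
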